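/- Suppose the unit-demand buyers' values {v_q(g)} are generic and (p,μ) is a Walrasian equilibrium. Then the swap graph defined with respect to (p,μ) is acyclic: it contains no directed cycle. -/

import Mathlib

open Finset

noncomputable section

/-- Utility of an option for a unit-demand buyer: `none` means buying nothing. -/
def utilU {m : ℕ} (v p : Fin m → ℝ) : Option (Fin m) → ℝ
  | none => 0
  | some g => v g - p g

/-- Value of an option (the value of the good, or `0` for the empty option). -/
def vOpt {n m : ℕ} (v : Fin n → Fin m → ℝ) (q : Fin n) : Option (Fin m) → ℝ
  | none => 0
  | some g => v q g

/-- Demand correspondence: the utility-maximizing options at prices `p`. -/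
def DemU {m : ℕ} (v p : Fin m → ℝ) : Set (Option (Fin m)) :=
  {o | ∀ o', utilU v p o' ≤ utilU v p o}

/-- Walrasian equilibrium for unit-demand buyers with supplies `s`. -/
def IsWEU {n m : ℕ} (s : Fin m → ℕ) (v : Fin n → Fin m → ℝ)
    (p : Fin m → ℝ) (μ : Fin n → Option (Fin m)) : Prop :=
  (∀ g, (univ.filter fun q => μ q = some g).card ≤ s g) ∧
  (∀ q, μ q ∈ DemU (v q) p) ∧
  (∀ g, (univ.filter fun q => μ q = some g).card < s g → p g = 0)

/-- `p` is a minimal Walrasian equilibrium price vector. -/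
def IsMinimalWEPriceU {n m : ℕ} (s : Fin m → ℕ) (v : Fin n → Fin m → ℝ)
    (p : Fin m → ℝ) : Prop :=
  (∀ g, 0 ≤ p g) ∧ (∃ μ, IsWEU s v p μ) ∧
  ∀ p' : Fin m → ℝ, (∀ g, 0 ≤ p' g) → (∃ μ, IsWEU s v p' μ) → ∀ g, p g ≤ p' g

/-- Genericity: the values are linearly independent over `{-1,0,1}`. -/
def GenericU {n m : ℕ} (v : Fin n → Fin m → ℝ) : Prop :=
  ∀ α : Fin n → Fin m → ℤ,
    (∀ q g, α q g = -1 ∨ α q g = 0 ∨ α q g = 1) →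
    (∑ q, ∑ g, (α q g : ℝ) * v q g) = 0 →
    ∀ q g, α q g = 0

/-- Edge of the swap graph: a directed edge from node `a` to node `b` (nodes are
`some`-goods or the null node `none`), witnessed by a buyer allocated `a` who also
demands the good `b`.  There are no edges into the null node. -/
def SwapEdgeU {n m : ℕ} (v : Fin n → Fin m → ℝ) (p : Fin m → ℝ)
    (μ : Fin n → Option (Fin m)) (a b : Option (Fin m)) : Prop :=
  ∃ (q : Fin n) (g : Fin m), b = some g ∧ μ q = a ∧ b ∈ DemU (v q) p ∧ a ≠ b

lemma exists_cycle_aux {α : Type*} {r : α → α → Prop} {a b : α}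
    (h : Relation.TransGen r a b) :
    ∃ k, 1 ≤ k ∧ ∃ c : ℕ → α, c 0 = a ∧ c k = b ∧ ∀ i < k, r (c i) (c (i+1)) := by
  induction h with
  | @single b hab =>
      refine ⟨1, le_refl 1, fun i => if i = 0 then a else b, by simp, by simp, ?_⟩
      intro i hi
      interval_cases i
      simpa using hab
  | @tail b d hab hbd ih =>
      obtain ⟨k, hk, f, h0, hkb, hE⟩ := ih
      refine ⟨k + 1, by omega, fun i => if i ≤ k then f i else d, by simp [h0], by simp, ?_⟩
      intro i hi
      rcases Nat.lt_or_ge i k with h | h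
      · have h1 : i ≤ k := by omega
        have h2 : i + 1 ≤ k := by omega
        simpa [h1, h2] using hE i h
      · have : i = k := by omega
        subst this
        have h2 : ¬ (i + 1 ≤ i) := by omega
        simpa [h2, hkb] using hbd

/-- under generic unit-demand valuations, the swap graph of a Walrasian
equilibrium `(p, μ)` contains no directed cycle. -/
theorem stmt3 (n m : ℕ) (s : Fin m → ℕ) (hs : ∀ g, 1 ≤ s g)
    (v : Fin n → Fin m → ℝ) (hv : ∀ q g, 0 ≤ v q g) (hgen : GenericU v)
    (p : Fin m → ℝ) (hp : ∀ g, 0 ≤ p g) (μ : Fin n → Option (Fin m))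
    (hWE : IsWEU s v p μ) :
    ∀ x : Option (Fin m), ¬ Relation.TransGen (SwapEdgeU v p μ) x x := by
  classical
  intro x hx
  -- a cycle exists; take one of minimal length
  set r := SwapEdgeU v p μ with hr
  have hP : ∃ k, 1 ≤ k ∧ ∃ c : ℕ → Option (Fin m), c k = c 0 ∧ ∀ i < k, r (c i) (c (i+1)) := by
    obtain ⟨k, hk, c, h0, hk', hE⟩ := exists_cycle_aux hx
    exact ⟨k, hk, c, by rw [hk', h0], hE⟩
  set K := Nat.find hP with hKdef
  obtain ⟨hK1, c, hcyc, hE⟩ := Nat.find_spec hP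
  rw [← hKdef] at hK1 hcyc hE
  -- injectivity on [0, K)
  have key : ∀ i j, i < j → j < K → c i ≠ c j := by
    intro i j hij hjK heq
    have hPji : 1 ≤ j - i ∧ ∃ c' : ℕ → Option (Fin m), c' (j-i) = c' 0 ∧
        ∀ a < j - i, r (c' a) (c' (a+1)) := by
      refine ⟨by omega, fun a => c (i + a), ?_, ?_⟩
      · show c (i + (j - i)) = c (i + 0)
        have h1 : i + (j - i) = j := by omega
        rw [h1, Nat.add_zero, ← heq]
      · intro a ha
        show r (c (i + a)) (c (i + (a + 1)))
        have h2 : i + (a + 1) = (i + a) + 1 := by omega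
        rw [h2]
        exact hE (i + a) (by omega)
    exact Nat.find_min hP (by omega : j - i < K) hPji
  -- K ≥ 2
  have hK2 : 2 ≤ K := by
    by_contra h
    have hK : K = 1 := by omega
    obtain ⟨q, g, hb, hμ, hd, hab⟩ := hE 0 (by omega)
    rw [hK] at hcyc
    exact hab (by rw [← hcyc])
  obtain ⟨k0, hKeq⟩ : ∃ k0, K = k0 + 2 := ⟨K - 2, by omega⟩
  -- move to Fin (k0+2)
  set cc : Fin (k0+2) → Option (Fin m) := fun i => c i.val with hcc
  have hccE : ∀ i : Fin (k0+2), r (cc i) (cc (i+1)) := by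
    intro i
    have hiv : i.val < K := by rw [hKeq]; exact i.isLt
    by_cases h : i.val + 1 < k0 + 2
    · have hv1 : ((i+1 : Fin (k0+2))).val = i.val + 1 := by
        simp [Fin.val_add, Nat.mod_eq_of_lt h]
      have := hE i.val (by omega)
      simpa [hcc, hv1] using this
    · have hival : i.val = k0 + 1 := by omega
      have hv1 : ((i+1 : Fin (k0+2))).val = 0 := by
        simp [Fin.val_add, hival]
      have := hE (k0+1) (by omega)
      have hck : c (k0 + 2) = c 0 := by rw [← hKeq]; exact hcyc
      simp only [hcc, hv1, hival]
      rw [← hck]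
      exact this
  have hccinj : Function.Injective cc := by
    intro i j hij
    by_contra hne
    have hvne : i.val ≠ j.val := fun h => hne (Fin.ext h)
    rcases Nat.lt_or_ge i.val j.val with h | h
    · exact key i.val j.val h (by omega) hij
    · have h' : j.val < i.val := by omega
      exact key j.val i.val h' (by omega) hij.symm
  -- extract buyers and goods
  have hEx : ∀ i : Fin (k0+2), ∃ q g, cc (i+1) = some g ∧ μ q = cc i ∧
      some g ∈ DemU (v q) p ∧ cc i ≠ some g := by
    intro i
    obtain ⟨q, g, hb, hμ, hd, hab⟩ := hccE i
    rw [hb] at hab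
    exact ⟨q, g, hb, hμ, by rw [← hb]; exact (hb ▸ hd), hab⟩
  choose Q G' h1 h2 h3 h4 using hEx
  set G : Fin (k0+2) → Fin m := fun i => G' (i - 1) with hG
  have hccG : ∀ i, cc i = some (G i) := by
    intro i
    have := h1 (i - 1)
    simpa [hG, sub_add_cancel] using this
  have hG1 : ∀ i : Fin (k0+2), G (i + 1) = G' i := by
    intro i; simp [hG, add_sub_cancel_right]
  have hμQ : ∀ i, μ (Q i) = some (G i) := by
    intro i; rw [h2 i, hccG i]
  -- utility equalities
  have hutil : ∀ i, v (Q i) (G i) - v (Q i) (G (i+1)) = p (G i) - p (G (i+1)) := by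
    intro i
    have hdem := hWE.2.1 (Q i)
    simp only [DemU, Set.mem_setOf_eq] at hdem
    have h3' := h3 i
    simp only [DemU, Set.mem_setOf_eq] at h3'
    have e1 : utilU (v (Q i)) p (some (G' i)) ≤ utilU (v (Q i)) p (μ (Q i)) := hdem _
    have e2 : utilU (v (Q i)) p (μ (Q i)) ≤ utilU (v (Q i)) p (some (G' i)) := h3' _
    have heq := le_antisymm e2 e1
    rw [hμQ i] at heq
    rw [hG1 i]
    simp only [utilU] at heq
    linarith
  -- injectivity of Q and G
  have hQinj : Function.Injective Q := by
    intro i j h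
    apply hccinj
    rw [← h2 i, ← h2 j, h]
  have hGinj : Function.Injective G := by
    intro i j h
    apply hccinj
    rw [hccG i, hccG j, h]
  have hone : (1 : Fin (k0+2)) ≠ 0 := by
    simp [Fin.ext_iff]
  -- the genericity coefficients
  set α : Fin n → Fin m → ℤ := fun q g =>
    ∑ i : Fin (k0+2), ((if Q i = q ∧ G i = g then (1:ℤ) else 0)
      - (if Q i = q ∧ G (i+1) = g then (1:ℤ) else 0)) with hα
  have hcard1 : ∀ (q : Fin n) (g : Fin m),
      (∑ i : Fin (k0+2), if Q i = q ∧ G i = g then (1:ℤ) else 0) = 0 ∨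
      (∑ i : Fin (k0+2), if Q i = q ∧ G i = g then (1:ℤ) else 0) = 1 := by
    intro q g
    rw [Finset.sum_boole]
    have : (univ.filter fun i : Fin (k0+2) => Q i = q ∧ G i = g).card ≤ 1 := by
      apply Finset.card_le_one.mpr
      intro a ha b hb
      simp only [Finset.mem_filter] at ha hb
      exact hQinj (ha.2.1.trans hb.2.1.symm)
    interval_cases h : (univ.filter fun i : Fin (k0+2) => Q i = q ∧ G i = g).card
    · left; simp [h]
    · right; simp [h]
  have hcard2 : ∀ (q : Fin n) (g : Fin m),
      (∑ i : Fin (k0+2), if Q i = q ∧ G (i+1) = g then (1:ℤ) else 0) = 0 ∨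
      (∑ i : Fin (k0+2), if Q i = q ∧ G (i+1) = g then (1:ℤ) else 0) = 1 := by
    intro q g
    rw [Finset.sum_boole]
    have : (univ.filter fun i : Fin (k0+2) => Q i = q ∧ G (i+1) = g).card ≤ 1 := by
      apply Finset.card_le_one.mpr
      intro a ha b hb
      simp only [Finset.mem_filter] at ha hb
      exact hQinj (ha.2.1.trans hb.2.1.symm)
    interval_cases h : (univ.filter fun i : Fin (k0+2) => Q i = q ∧ G (i+1) = g).card
    · left; simp [h]
    · right; simp [h]
  have hrange : ∀ q g, α q g = -1 ∨ α q g = 0 ∨ α q g = 1 := by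
    intro q g
    have hs : α q g = (∑ i : Fin (k0+2), if Q i = q ∧ G i = g then (1:ℤ) else 0)
        - (∑ i : Fin (k0+2), if Q i = q ∧ G (i+1) = g then (1:ℤ) else 0) := by
      simp only [hα]; rw [Finset.sum_sub_distrib]
    rcases hcard1 q g with h1' | h1' <;> rcases hcard2 q g with h2' | h2' <;>
      rw [hs, h1', h2'] <;> norm_num
  have hdouble : ∀ (a : Fin n) (b : Fin m),
      (∑ q, ∑ g, if a = q ∧ b = g then v q g else 0) = v a b := by
    intro a b
    simp [ite_and, Finset.sum_ite_eq]
  have hsum : (∑ q, ∑ g, (α q g : ℝ) * v q g) = 0 := by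
    have hterm : ∀ (q : Fin n) (g : Fin m), (α q g : ℝ) * v q g =
        ∑ i : Fin (k0+2), ((if Q i = q ∧ G i = g then v q g else 0)
          - (if Q i = q ∧ G (i+1) = g then v q g else 0)) := by
      intro q g
      simp only [hα]
      push_cast
      rw [Finset.sum_mul]
      apply Finset.sum_congr rfl
      intro i _
      rw [sub_mul]
      congr 1 <;> rw [ite_mul, one_mul, zero_mul]
    calc (∑ q, ∑ g, (α q g : ℝ) * v q g)
        = ∑ q, ∑ g, ∑ i : Fin (k0+2), ((if Q i = q ∧ G i = g then v q g else 0)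
          - (if Q i = q ∧ G (i+1) = g then v q g else 0)) := by
          exact Finset.sum_congr rfl fun q _ => Finset.sum_congr rfl fun g _ => hterm q g
      _ = ∑ q, ∑ i : Fin (k0+2), ∑ g, ((if Q i = q ∧ G i = g then v q g else 0)
          - (if Q i = q ∧ G (i+1) = g then v q g else 0)) :=
          Finset.sum_congr rfl fun q _ => Finset.sum_comm
      _ = ∑ i : Fin (k0+2), ∑ q, ∑ g, ((if Q i = q ∧ G i = g then v q g else 0)
          - (if Q i = q ∧ G (i+1) = g then v q g else 0)) :=
          Finset.sum_comm
      _ = ∑ i : Fin (k0+2), (v (Q i) (G i) - v (Q i) (G (i+1))) := by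
          apply Finset.sum_congr rfl
          intro i _
          simp only [Finset.sum_sub_distrib]
          rw [hdouble (Q i) (G i), hdouble (Q i) (G (i+1))]
      _ = ∑ i : Fin (k0+2), (p (G i) - p (G (i+1))) :=
          Finset.sum_congr rfl fun i _ => hutil i
      _ = (∑ i : Fin (k0+2), p (G i)) - ∑ i : Fin (k0+2), p (G (i+1)) :=
          Finset.sum_sub_distrib _ _
      _ = 0 := by
          rw [Fintype.sum_equiv (Equiv.addRight (1 : Fin (k0+2)))
            (fun i => p (G (i+1))) (fun i => p (G i)) (fun i => rfl)]
          ring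
  have hzero := hgen α hrange hsum (Q 0) (G 0)
  have hval : α (Q 0) (G 0) = 1 := by
    simp only [hα]
    have hA : (∑ i : Fin (k0+2), if Q i = Q 0 ∧ G i = G 0 then (1:ℤ) else 0) = 1 := by
      rw [Finset.sum_eq_single_of_mem 0 (Finset.mem_univ 0)]
      · simp
      · intro i _ hne
        rw [if_neg]
        rintro ⟨hq, -⟩
        exact hne (hQinj hq)
    have hB : (∑ i : Fin (k0+2), if Q i = Q 0 ∧ G (i+1) = G 0 then (1:ℤ) else 0) = 0 := by
      apply Finset.sum_eq_zero
      intro i _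
      rw [if_neg]
      rintro ⟨hq, hg⟩
      have hi0 : i = 0 := hQinj hq
      have : i + 1 = (0 : Fin (k0+2)) := hGinj hg
      rw [hi0] at this
      simpa using hone (by simpa using this)
    rw [Finset.sum_sub_distrib, hA, hB]
    ring
  rw [hzero] at hval
  exact absurd hval (by norm_num)

end
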